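/- arXiv:1405.0925 — 3 statements merged into one kernel-verified Lean document; each statement's English description precedes it below -/
import Mathlib

section
/- Let F be a differential field, A the companion matrix with last row (a_1,...,a_{l+1}) and 1's on the superdiagonal, and f ∈ F^× with ∂(f)/f = a_{l+1}. Let B_1 = diag(1,...,1,1/f). Then the gauge transform B_1 A B_1^{−1} + ∂(B_1)B_1^{−1} has trace zero, i.e., lies in sl_{l+1}(F); explicitly it has 1's on the superdiagonal except entry f in position (l, l+1), last row (a_1/f,...,a_l/f, 0), and 0 elsewhere. -/
open Matrix

/-- Entrywise application of a derivation to a matrix. -/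
def matD {n : ℕ} {F : Type*} (D : F → F) (M : Matrix (Fin n) (Fin n) F) :
    Matrix (Fin n) (Fin n) F :=
  Matrix.of fun i j => D (M i j)

/-- The companion matrix with `1`'s on the superdiagonal and last row `(a_1, …, a_{l+1})`. -/
def compMat (l : ℕ) {F : Type*} [Field F] (a : Fin (l + 1) → F) :
    Matrix (Fin (l + 1)) (Fin (l + 1)) F :=
  Matrix.of fun i j => if (i : ℕ) + 1 = (j : ℕ) then 1 else if (i : ℕ) = l then a j else 0

/-- Gauge transformation of `A` by `B`: `B A B⁻¹ + ∂(B)B⁻¹`. -/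
noncomputable def gaugeT {n : ℕ} {F : Type*} [Field F] (D : F → F)
    (B A : Matrix (Fin n) (Fin n) F) : Matrix (Fin n) (Fin n) F :=
  B * A * B⁻¹ + matD D B * B⁻¹

/-- for the companion matrix `A` with last row `(a_1, …, a_{l+1})` and
`f ∈ F^×` with `∂(f)/f = a_{l+1}`, the gauge transform of `A` by `B₁ = diag(1, …, 1, 1/f)`
has trace zero, i.e. lies in `sl_{l+1}(F)`; explicitly it has `1`'s on the superdiagonal
except for entry `f` in position `(l, l+1)`, last row `(a_1/f, …, a_l/f, 0)`, and `0`
elsewhere. -/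
theorem gauge_companion_by_diag (l : ℕ) (F : Type*) [Field F] (D : F → F)
    (hadd : ∀ a b : F, D (a + b) = D a + D b)
    (hmul : ∀ a b : F, D (a * b) = D a * b + a * D b)
    (a : Fin (l + 1) → F) (f : F) (hf : f ≠ 0) (hfa : D f / f = a (Fin.last l)) :
    (gaugeT D (Matrix.diagonal fun i => if i = Fin.last l then f⁻¹ else 1)
        (compMat l a)).trace = 0 ∧
    gaugeT D (Matrix.diagonal fun i => if i = Fin.last l then f⁻¹ else 1) (compMat l a) =
      Matrix.of (fun i j : Fin (l + 1) =>
        if (i : ℕ) + 1 = (j : ℕ) then (if (j : ℕ) = l then f else 1)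
        else if (i : ℕ) = l ∧ (j : ℕ) < l then a j / f else 0) := by
  have hmain : gaugeT D (Matrix.diagonal fun i => if i = Fin.last l then f⁻¹ else 1)
      (compMat l a) =
      Matrix.of (fun i j : Fin (l + 1) =>
        if (i : ℕ) + 1 = (j : ℕ) then (if (j : ℕ) = l then f else 1)
        else if (i : ℕ) = l ∧ (j : ℕ) < l then a j / f else 0) := by
    have hD0 : D 0 = 0 := by have := hadd 0 0; simp at this; exact this
    have hD1 : D 1 = 0 := by have := hmul 1 1; simp at this; exact this
    have hDfinv : D f⁻¹ * f = -(a (Fin.last l)) := by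
      have h1 := hmul f f⁻¹
      rw [mul_inv_cancel₀ hf, hD1] at h1
      calc D f⁻¹ * f = f * D f⁻¹ := mul_comm _ _
        _ = -(D f * f⁻¹) := by linear_combination -h1
        _ = -(D f / f) := by rw [div_eq_mul_inv]
        _ = -(a (Fin.last l)) := by rw [hfa]
    set d : Fin (l + 1) → F := fun i => if i = Fin.last l then f⁻¹ else 1 with hd
    set d' : Fin (l + 1) → F := fun i => if i = Fin.last l then f else 1 with hd'
    have hBC : Matrix.diagonal d * Matrix.diagonal d' = 1 := by
      rw [Matrix.diagonal_mul_diagonal]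
      have h : (fun i => d i * d' i) = fun _ : Fin (l+1) => (1 : F) := by
        funext i
        by_cases h : i = Fin.last l <;> simp [hd, hd', h, inv_mul_cancel₀ hf]
      rw [h, Matrix.diagonal_one]
    have hInv : (Matrix.diagonal d)⁻¹ = Matrix.diagonal d' := Matrix.inv_eq_right_inv hBC
    ext i j
    rw [gaugeT, hInv]
    simp only [Matrix.add_apply, Matrix.mul_diagonal, Matrix.diagonal_mul, matD,
      Matrix.of_apply, compMat, Matrix.diagonal_apply]
    have hi1 := i.isLt
    have hj1 := j.isLt
    simp only [hd, hd', Fin.ext_iff, Fin.val_last]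
    by_cases hij : (i : ℕ) + 1 = (j : ℕ)
    · have hil : ¬ ((i : ℕ) = l) := by omega
      have hieqj : ¬ ((i : ℕ) = (j : ℕ)) := by omega
      rw [if_neg hil, if_pos hij, if_neg hieqj, hD0, if_pos hij, zero_mul, add_zero, one_mul]
      by_cases hjl : (j : ℕ) = l
      · rw [if_pos hjl, one_mul]
      · rw [if_neg hjl, one_mul]
    · rw [if_neg hij, if_neg hij]
      by_cases hil : (i : ℕ) = l
      · rw [if_pos hil]
        by_cases hjl : (j : ℕ) = l
        · have hijeq : (i : ℕ) = (j : ℕ) := by omega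
          have haj : a j = a (Fin.last l) := by
            congr 1
            exact Fin.ext (by simp [hjl])
          rw [if_pos hijeq, if_pos hil, if_pos hjl,
            if_neg (by omega : ¬ ((i : ℕ) = l ∧ (j : ℕ) < l)), hDfinv, haj]
          field_simp
          ring
        · have hieqj : ¬ ((i : ℕ) = (j : ℕ)) := by omega
          have hc : (i : ℕ) = l ∧ (j : ℕ) < l := ⟨hil, by omega⟩
          rw [if_neg hieqj, hD0, if_neg hjl, zero_mul, add_zero, mul_one,
            if_pos hil, div_eq_mul_inv, mul_comm f⁻¹ (a j), if_pos hc]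
      · have hD2 : D (if (i : ℕ) = (j : ℕ) then (if (i : ℕ) = l then f⁻¹ else 1) else 0) = 0 := by
          split_ifs <;> simp [hD0, hD1]
        rw [hD2, zero_mul, add_zero, if_neg hil, if_neg hil, mul_zero, zero_mul,
          if_neg (fun h => hil h.1)]
  refine ⟨?_, hmain⟩
  rw [hmain, Matrix.trace]
  apply Finset.sum_eq_zero
  intro i _
  simp only [Matrix.diag_apply, Matrix.of_apply]
  rw [if_neg (by omega), if_neg (by omega)]
end

section
/- Let F be a differential field and A ∈ A_Δ + H(F) ⊕ ⊕_{δ ∈ Φ⁻} g_δ(F) in sl_{l+1}(F), where A_Δ = Σ_{i=1}^l E_{i,i+1}, H(F) is the diagonal trace-zero part, and the negative root spaces span the strictly lower triangular matrices. Then there exists a lower unitriangular matrix U ∈ SL_{l+1}(F) such that U A U^{−1} + ∂(U)U^{−1} has zero diagonal, i.e., lies in A_Δ + (strictly lower triangular matrices over F). -/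
open Matrix Finset

section Aux

variable {F : Type*} [Field F]

/-- Partial sums of a sequence. -/
def gS (d : ℕ → F) (n : ℕ) : F := ∑ k ∈ Finset.range (n + 1), d k

/-- Lower unitriangular matrix with subdiagonal `gS d`. -/
def gU (d : ℕ → F) (i j : ℕ) : F :=
  if i = j then 1 else if j + 1 = i then gS d j else 0

/-- Explicit inverse of `gU`. -/
def gV (d : ℕ → F) (i j : ℕ) : F :=
  if j ≤ i then (-1) ^ (i - j) * ∏ k ∈ Finset.Ico j i, gS d k else 0

lemma gV_self (d : ℕ → F) (j : ℕ) : gV d j j = 1 := by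
  simp [gV]

lemma gV_of_lt (d : ℕ → F) {i j : ℕ} (h : i < j) : gV d i j = 0 := by
  simp [gV, not_le.2 h]

lemma gV_succ (d : ℕ → F) (j : ℕ) : gV d (j + 1) j = -gS d j := by
  simp [gV, Nat.Ico_succ_singleton, show j + 1 - j = 1 from by omega]

lemma rowU (d : ℕ → F) {n i : ℕ} (hi : i < n) (f : ℕ → F) :
    ∑ k ∈ Finset.range n, gU d i k * f k
      = f i + (if i = 0 then 0 else gS d (i - 1) * f (i - 1)) := by
  have hpt : ∀ k, gU d i k * f k
      = (if k = i then f k else 0) + (if k + 1 = i then gS d k * f k else 0) := by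
    intro k
    rcases eq_or_ne k i with h | h
    · subst h
      simp [gU, (by omega : ¬ k + 1 = k)]
    · rcases eq_or_ne (k + 1) i with h2 | h2
    
      · simp [gU, h2, h, Ne.symm h, (by omega : ¬ i = k)]
      · simp [gU, h, h2, Ne.symm h, (by omega : ¬ i = k)]
  calc ∑ k ∈ Finset.range n, gU d i k * f k
      = ∑ k ∈ Finset.range n, ((if k = i then f k else 0)
          + (if k + 1 = i then gS d k * f k else 0)) := Finset.sum_congr rfl fun k _ => hpt k
    _ = (∑ k ∈ Finset.range n, (if k = i then f k else 0))
          + ∑ k ∈ Finset.range n, (if k + 1 = i then gS d k * f k else 0) :=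
        Finset.sum_add_distrib
    _ = f i + (if i = 0 then 0 else gS d (i - 1) * f (i - 1)) := by
        congr 1
        · rw [Finset.sum_ite_eq' (Finset.range n) i f, if_pos (Finset.mem_range.2 hi)]
        · rcases Nat.eq_zero_or_eq_succ_pred i with h0 | hm
          · rw [if_pos h0]
            apply Finset.sum_eq_zero
            intro k _
            rw [if_neg (by omega)]
          · set m := i - 1 with hmdef
            rw [if_neg (by omega)]
            have : ∀ k, (if k + 1 = i then gS d k * f k else 0)
                = (if k = m then gS d k * f k else 0) := by
              intro k; congr 1; simp only [eq_iff_iff]; omega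
            rw [Finset.sum_congr rfl fun k _ => this k,
              Finset.sum_ite_eq' (Finset.range n) m (fun k => gS d k * f k),
              if_pos (Finset.mem_range.2 (by omega))]

lemma UVone (d : ℕ → F) {n i j : ℕ} (hi : i < n) :
    ∑ k ∈ Finset.range n, gU d i k * gV d k j = if i = j then 1 else 0 := by
  rw [rowU d hi]
  rcases Nat.eq_zero_or_eq_succ_pred i with h0 | hm
  · subst h0
    rcases eq_or_ne 0 j with h | h
    · subst h; simp [gV_self]
    · rw [if_pos rfl, add_zero, if_neg h, gV_of_lt d (by omega)]
  · set m := i - 1 with hmdef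
    have him : i = m + 1 := hm
    rw [if_neg (by omega)]
    rcases lt_trichotomy i j with h | h | h
    · rw [gV_of_lt d h, gV_of_lt d (by omega), if_neg (by omega)]
      ring
    · subst h
      rw [gV_self, gV_of_lt d (by omega), if_pos rfl]
      ring
    · -- j < i, so j ≤ m
      rw [if_neg (by omega)]
      have hji : j ≤ m := by omega
      have hprod : gV d i j = -(gS d m * gV d m j) := by
        rw [gV, gV, if_pos (by omega), if_pos hji, him,
          Finset.prod_Ico_succ_top hji,
          (by omega : m + 1 - j = (m - j) + 1), pow_succ]
        ring
      rw [hprod]; ring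

lemma colV_upper (d : ℕ → F) (a : ℕ → ℕ → F) {n p j : ℕ} (hj : j < n) (hp : p < j)
    (hup : ∀ q, p < q → q < n → a p q = if p + 1 = q then 1 else 0) :
    ∑ q ∈ Finset.range n, a p q * gV d q j = if p + 1 = j then 1 else 0 := by
  have hpt : ∀ q ∈ Finset.range n, a p q * gV d q j
      = if q = j then (if p + 1 = j then (1 : F) else 0) else 0 := by
    intro q hq
    rcases lt_trichotomy q j with h | h | h
    · rw [gV_of_lt d h, mul_zero, if_neg (by omega)]
    · subst h
      rw [gV_self, mul_one, if_pos rfl, hup q hp (Finset.mem_range.1 hq)]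
    · rw [hup q (lt_trans hp h) (Finset.mem_range.1 hq), if_neg (by omega), zero_mul,
        if_neg (by omega)]
  rw [Finset.sum_congr rfl hpt,
    Finset.sum_ite_eq' (Finset.range n) j (fun _ => if p + 1 = j then (1 : F) else 0),
    if_pos (Finset.mem_range.2 hj)]

lemma colV_diag (d : ℕ → F) (a : ℕ → ℕ → F) {n j : ℕ} (hj : j < n)
    (hup : ∀ q, j < q → q < n → a j q = if j + 1 = q then 1 else 0) :
    ∑ q ∈ Finset.range n, a j q * gV d q j
      = a j j - (if j + 1 < n then gS d j else 0) := by
  have hpt : ∀ q ∈ Finset.range n, a j q * gV d q j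
      = (if q = j then a j j else 0) + (if q = j + 1 then -gS d j else 0) := by
    intro q hq
    rcases lt_trichotomy q j with h | h | h
    · rw [gV_of_lt d h, mul_zero, if_neg (by omega), if_neg (by omega)]; ring
    · subst h
      rw [gV_self, mul_one, if_pos rfl, if_neg (by omega), add_zero]
    · rcases eq_or_ne q (j + 1) with h1 | h1
      · subst h1
        rw [hup _ h (Finset.mem_range.1 hq), if_pos rfl, gV_succ, one_mul,
          if_neg (by omega), if_pos rfl, zero_add]
      · rw [hup _ h (Finset.mem_range.1 hq), if_neg (by omega), zero_mul,
          if_neg (by omega), if_neg h1]; ring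
  rw [Finset.sum_congr rfl hpt, Finset.sum_add_distrib,
    Finset.sum_ite_eq' (Finset.range n) j (fun _ => a j j),
    Finset.sum_ite_eq' (Finset.range n) (j + 1) (fun _ => -gS d j),
    if_pos (Finset.mem_range.2 hj)]
  rcases lt_or_ge (j + 1) n with h | h
  · rw [if_pos (Finset.mem_range.2 h), if_pos h]; ring
  · rw [if_neg (by simp; omega), if_neg (by omega)]; ring

lemma rowDU (d : ℕ → F) (D : F → F) (D0 : D (0 : F) = 0) (D1 : D (1 : F) = 0)
    {n i j : ℕ} (hij : i ≤ j) :
    ∑ q ∈ Finset.range n, D (gU d i q) * gV d q j = 0 := by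
  apply Finset.sum_eq_zero
  intro q _
  rcases eq_or_ne i q with h | h
  · subst h; simp [gU, D1]
  · rcases eq_or_ne (q + 1) i with h2 | h2
    · rw [gV_of_lt d (by omega), mul_zero]
    · simp [gU, h, h2, D0]

lemma gauge_entry (d : ℕ → F) (a : ℕ → ℕ → F) (D : F → F) {n i j : ℕ}
    (hj : j < n) (hij : i ≤ j)
    (hup : ∀ p q, p < q → q < n → a p q = if p + 1 = q then 1 else 0)
    (D0 : D (0 : F) = 0) (D1 : D (1 : F) = 0) :
    (∑ q ∈ Finset.range n, (∑ p ∈ Finset.range n, gU d i p * a p q) * gV d q j)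
      + ∑ q ∈ Finset.range n, D (gU d i q) * gV d q j
    = if i = j then
        a i i - (if i + 1 < n then gS d i else 0) + (if i = 0 then 0 else gS d (i - 1))
      else (if i + 1 = j then 1 else 0) := by
  have hi : i < n := lt_of_le_of_lt hij hj
  rw [rowDU d D D0 D1 hij, add_zero]
  have hrw : ∀ q ∈ Finset.range n, (∑ p ∈ Finset.range n, gU d i p * a p q) * gV d q j
      = (a i q * gV d q j)
        + (if i = 0 then 0 else gS d (i - 1) * (a (i - 1) q * gV d q j)) := by
    intro q _
    rw [rowU d hi (fun p => a p q)]
    rcases eq_or_ne i 0 with h0 | h0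
    · rw [if_pos h0, if_pos h0, add_zero, add_zero]
    · rw [if_neg h0, if_neg h0]; ring
  rw [Finset.sum_congr rfl hrw, Finset.sum_add_distrib]
  rcases eq_or_ne i 0 with h0 | h0
  · subst h0
    rw [Finset.sum_eq_zero (fun q _ => if_pos rfl), add_zero]
    rcases eq_or_ne 0 j with h | h
    · subst h
      rw [if_pos rfl, colV_diag d a hj (fun q hq hqn => hup 0 q hq hqn), if_pos rfl,
        add_zero]
    · rw [if_neg h, colV_upper d a hj (by omega) (fun q hq hqn => hup 0 q hq hqn)]
  · have hsum2 : ∑ q ∈ Finset.range n,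
        (if i = 0 then 0 else gS d (i - 1) * (a (i - 1) q * gV d q j))
        = gS d (i - 1) * ∑ q ∈ Finset.range n, a (i - 1) q * gV d q j := by
      rw [Finset.mul_sum]
      exact Finset.sum_congr rfl fun q _ => if_neg h0
    rw [hsum2]
    have hm : i - 1 < j := by omega
    rw [colV_upper d a hj hm (fun q hq hqn => hup (i - 1) q hq hqn)]
    rcases eq_or_ne i j with h | h
    · subst h
      rw [colV_diag d a hj (fun q hq hqn => hup i q hq hqn), if_pos rfl,
        if_pos (by omega : i - 1 + 1 = i), if_neg h0, mul_one]
    · rw [if_neg h, if_neg (by omega : ¬ i - 1 + 1 = j),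
        colV_upper d a hj (by omega) (fun q hq hqn => hup i q hq hqn), mul_zero, add_zero]

end Aux

/-- let `A ∈ A_Δ + H(F) ⊕ ⊕_{δ ∈ Φ⁻} g_δ(F)` in `sl_{l+1}(F)`, i.e. `A` has
`1`'s on the superdiagonal, `0` elsewhere above the diagonal, and trace-zero diagonal part.
Then there is a lower unitriangular `U ∈ SL_{l+1}(F)` such that the gauge transform
`U A U⁻¹ + ∂(U)U⁻¹` has zero diagonal, i.e. lies in `A_Δ +` (strictly lower triangular
matrices over `F`). -/
theorem gauge_remove_diagonal (l : ℕ) (F : Type*) [Field F] (D : F → F)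
    (hadd : ∀ a b : F, D (a + b) = D a + D b)
    (hmul : ∀ a b : F, D (a * b) = D a * b + a * D b)
    (A : Matrix (Fin (l + 1)) (Fin (l + 1)) F)
    (hupper : ∀ i j : Fin (l + 1), (i : ℕ) < (j : ℕ) →
      A i j = if (i : ℕ) + 1 = (j : ℕ) then 1 else 0)
    (htrace : A.trace = 0) :
    ∃ U : Matrix (Fin (l + 1)) (Fin (l + 1)) F,
      (∀ i j : Fin (l + 1), (i : ℕ) < (j : ℕ) → U i j = 0) ∧ (∀ i, U i i = 1) ∧
      U.det = 1 ∧
      (∀ i, (U * A * U⁻¹ + matD D U * U⁻¹) i i = 0) ∧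
      (∀ i j : Fin (l + 1), (i : ℕ) < (j : ℕ) →
        (U * A * U⁻¹ + matD D U * U⁻¹) i j = if (i : ℕ) + 1 = (j : ℕ) then 1 else 0) := by
  classical
  have D0 : D (0 : F) = 0 := by
    have h : D 0 = D 0 + D 0 := by simpa using hadd 0 0
    exact (left_eq_add.1 h)
  have D1 : D (1 : F) = 0 := by
    have h : D 1 = D 1 + D 1 := by simpa using hmul 1 1
    exact (left_eq_add.1 h)
  set d : ℕ → F := fun k => if h : k < l + 1 then A ⟨k, h⟩ ⟨k, h⟩ else 0 with hd
  have hdFin : ∀ i : Fin (l + 1), d (i : ℕ) = A i i := by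
    intro i; simp [hd, i.isLt, i.is_le]
  set a : ℕ → ℕ → F := fun p q =>
      if hp : p < l + 1 then if hq : q < l + 1 then A ⟨p, hp⟩ ⟨q, hq⟩ else 0 else 0 with ha
  have haFin : ∀ p q : Fin (l + 1), a (p : ℕ) (q : ℕ) = A p q := by
    intro p q; simp [ha, p.isLt, q.isLt, p.is_le, q.is_le]
  have hup : ∀ p q, p < q → q < l + 1 → a p q = if p + 1 = q then 1 else 0 := by
    intro p q hpq hq
    have hp : p < l + 1 := lt_trans hpq hq
    simp only [ha, dif_pos hp, dif_pos hq]
    exact hupper ⟨p, hp⟩ ⟨q, hq⟩ hpq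
  have htr : gS d l = 0 := by
    have h : gS d l = ∑ i : Fin (l + 1), A i i := by
      rw [gS, ← Fin.sum_univ_eq_sum_range (fun k => d k) (l + 1)]
      exact Finset.sum_congr rfl fun i _ => hdFin i
    rw [h]
    simpa [Matrix.trace, Matrix.diag] using htrace
  have hdz : ∀ k, l + 1 ≤ k → d k = 0 := by
    intro k hk; exact dif_neg (by omega)
  have hgsucc : ∀ m : ℕ, gS d (m + 1) = gS d m + d (m + 1) := by
    intro m; exact Finset.sum_range_succ d (m + 1)
  have hstop : ∀ m, l ≤ m → gS d m = 0 := by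
    intro m hm
    induction m, hm using Nat.le_induction with
    | base => exact htr
    | succ m hm ih => rw [hgsucc, ih, hdz (m + 1) (by omega), add_zero]
  set U : Matrix (Fin (l + 1)) (Fin (l + 1)) F :=
    Matrix.of (fun i j => gU d (i : ℕ) (j : ℕ)) with hU
  set V : Matrix (Fin (l + 1)) (Fin (l + 1)) F :=
    Matrix.of (fun i j => gV d (i : ℕ) (j : ℕ)) with hV
  have hUapp : ∀ i j : Fin (l + 1), U i j = gU d (i : ℕ) (j : ℕ) := fun i j => rfl
  have hUlow : ∀ i j : Fin (l + 1), (i : ℕ) < (j : ℕ) → U i j = 0 := by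
    intro i j hij
    rw [hUapp, gU, if_neg (by omega), if_neg (by omega)]
  have hUdiag : ∀ i : Fin (l + 1), U i i = 1 := by
    intro i; rw [hUapp, gU, if_pos rfl]
  have hUV : U * V = 1 := by
    ext i j
    rw [Matrix.mul_apply, Matrix.one_apply]
    calc ∑ k : Fin (l + 1), U i k * V k j
        = ∑ k ∈ Finset.range (l + 1), gU d ↑i k * gV d k ↑j := by
          rw [← Fin.sum_univ_eq_sum_range (fun k => gU d ↑i k * gV d k ↑j) (l + 1)]
          rfl
      _ = if (i : ℕ) = (j : ℕ) then 1 else 0 := UVone d i.isLt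
      _ = if i = j then 1 else 0 := by simp [Fin.ext_iff]
  have hVinv : U⁻¹ = V := Matrix.inv_eq_right_inv hUV
  have hdet : U.det = 1 := by
    rw [Matrix.det_of_lowerTriangular U (fun i j hij => hUlow i j hij)]
    simp [hUdiag]
  have hgauge : ∀ i j : Fin (l + 1), (i : ℕ) ≤ (j : ℕ) →
      (U * A * U⁻¹ + matD D U * U⁻¹) i j
        = if (i : ℕ) = (j : ℕ) then
            a ↑i ↑i - (if (i : ℕ) + 1 < l + 1 then gS d ↑i else 0)
              + (if (i : ℕ) = 0 then 0 else gS d ((i : ℕ) - 1))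
          else (if (i : ℕ) + 1 = (j : ℕ) then 1 else 0) := by
    intro i j hij
    rw [hVinv, Matrix.add_apply, Matrix.mul_apply, Matrix.mul_apply]
    have h1 : ∀ q : Fin (l + 1),
        (U * A) i q = ∑ p ∈ Finset.range (l + 1), gU d ↑i p * a p ↑q := by
      intro q
      rw [Matrix.mul_apply, ← Fin.sum_univ_eq_sum_range (fun p => gU d ↑i p * a p ↑q) (l + 1)]
      exact Finset.sum_congr rfl fun p _ => by rw [hUapp, haFin]
    calc (∑ q : Fin (l + 1), (U * A) i q * V q j)
          + ∑ q : Fin (l + 1), (matD D U) i q * V q j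
        = (∑ q ∈ Finset.range (l + 1),
            (∑ p ∈ Finset.range (l + 1), gU d ↑i p * a p q) * gV d q ↑j)
            + ∑ q ∈ Finset.range (l + 1), D (gU d ↑i q) * gV d q ↑j := by
          congr 1
          · rw [← Fin.sum_univ_eq_sum_range
              (fun q => (∑ p ∈ Finset.range (l + 1), gU d ↑i p * a p q) * gV d q ↑j) (l + 1)]
            exact Finset.sum_congr rfl fun q _ => by rw [h1 q]; rfl
          · rw [← Fin.sum_univ_eq_sum_range (fun q => D (gU d ↑i q) * gV d q ↑j) (l + 1)]
            rfl
      _ = _ := gauge_entry d a D j.isLt hij hup D0 D1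
  have hkey : ∀ m : ℕ, m < l + 1 →
      d m - (if m + 1 < l + 1 then gS d m else 0) + (if m = 0 then 0 else gS d (m - 1)) = 0 := by
    intro m hm
    have hgs0 : gS d 0 = d 0 := by simp [gS]
    rcases Nat.eq_zero_or_pos m with h0 | hpos
    · subst h0
      rw [if_pos rfl, add_zero]
      rcases lt_or_ge (0 + 1) (l + 1) with h | h
      · rw [if_pos h, hgs0]; ring
      · rw [if_neg (by omega)]
        have h2 := hstop 0 (by omega)
        rw [hgs0] at h2
        rw [h2]; ring
    · obtain ⟨k, rfl⟩ : ∃ k, m = k + 1 := ⟨m - 1, by omega⟩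
      rw [if_neg (Nat.succ_ne_zero k), Nat.add_sub_cancel]
      rcases lt_or_ge (k + 1 + 1) (l + 1) with h | h
      · rw [if_pos h, hgsucc k]; ring
      · rw [if_neg (by omega)]
        have h3 : gS d (k + 1) = 0 := hstop (k + 1) (by omega)
        rw [hgsucc k] at h3
        linear_combination h3
  refine ⟨U, hUlow, hUdiag, hdet, ?_, ?_⟩
  · intro i
    rw [hgauge i i le_rfl, if_pos rfl]
    have hai : a ↑i ↑i = d ↑i := by rw [haFin i i, ← hdFin i]
    rw [hai]
    exact hkey ↑i i.isLt
  · intro i j hij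
    rw [hgauge i j (le_of_lt hij), if_neg (by omega)]
end

section
/- Let F be a differential field with constants C. Every matrix A ∈ M_{l+1}(F) of the form A_Δ + h + N, where A_Δ has 1's on the superdiagonal, h is diagonal with trace zero, and N is strictly lower triangular, is gauge equivalent over GL_{l+1}(F) to a trace-zero companion matrix with last row (f_1,...,f_l, 0) for some f_1,...,f_l ∈ F. -/
open Matrix

/-- The trace-zero companion matrix with last row `(f_1, …, f_l, 0)`, `1`'s on the
superdiagonal and `0` elsewhere. -/
def compMat0 (l : ℕ) {F : Type*} [Field F] (f : Fin l → F) :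
    Matrix (Fin (l + 1)) (Fin (l + 1)) F :=
  Matrix.of fun i j =>
    if (i : ℕ) + 1 = (j : ℕ) then 1
    else if h : (i : ℕ) = l ∧ (j : ℕ) < l then f ⟨j, h.2⟩ else 0

/-- every matrix `A = A_Δ + h + N` (`A_Δ` with `1`'s on the superdiagonal, `h`
diagonal with trace zero, `N` strictly lower triangular) over a differential field `F` is
gauge equivalent over `GL_{l+1}(F)` to a trace-zero companion matrix with last row
`(f_1, …, f_l, 0)` for some `f_i ∈ F`. -/
theorem gauge_equivalent_to_companion (l : ℕ) (F : Type*) [Field F] (D : F → F)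
    (hadd : ∀ a b : F, D (a + b) = D a + D b)
    (hmul : ∀ a b : F, D (a * b) = D a * b + a * D b)
    (A : Matrix (Fin (l + 1)) (Fin (l + 1)) F)
    (hupper : ∀ i j : Fin (l + 1), (i : ℕ) < (j : ℕ) →
      A i j = if (i : ℕ) + 1 = (j : ℕ) then 1 else 0)
    (htrace : A.trace = 0) :
    ∃ B : Matrix (Fin (l + 1)) (Fin (l + 1)) F, IsUnit B.det ∧
      ∃ f : Fin l → F, B * A * B⁻¹ + matD D B * B⁻¹ = compMat0 l f := by
  have hD0 : D 0 = 0 := by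
    have h := hadd 0 0
    rw [add_zero] at h
    linear_combination -h
  have hD1 : D 1 = 0 := by
    have h := hmul 1 1
    rw [mul_one, one_mul] at h
    linear_combination -h
  -- the rows of the gauge matrix, defined recursively
  set r : ℕ → Fin (l + 1) → F := fun k =>
    Nat.rec (fun j => if (j : ℕ) = 0 then 1 else 0)
      (fun _ prev j => (∑ m, prev m * A m j) + D (prev j)) k with hrdef
  have hr0 : ∀ j : Fin (l + 1), r 0 j = if (j : ℕ) = 0 then 1 else 0 := fun _ => rfl
  have hrS : ∀ (k : ℕ) (j : Fin (l + 1)),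
      r (k + 1) j = (∑ m, r k m * A m j) + D (r k j) := fun _ _ => rfl
  -- unitriangularity of the rows
  have key : ∀ k : ℕ, ∀ j : Fin (l + 1),
      (k < (j : ℕ) → r k j = 0) ∧ ((j : ℕ) = k → r k j = 1) := by
    intro k
    induction k with
    | zero =>
      intro j
      constructor
      · intro h
        rw [hr0, if_neg (by omega)]
      · intro h
        rw [hr0, if_pos h]
    | succ k ih =>
      intro j
      constructor
      · intro h
        rw [hrS]
        have h1 : ∀ m : Fin (l + 1), r k m * A m j = 0 := by
          intro m
          rcases lt_or_ge k (m : ℕ) with hm | hm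
          · rw [(ih m).1 hm, zero_mul]
          · rw [hupper m j (by omega), if_neg (by omega), mul_zero]
        rw [Finset.sum_eq_zero (fun m _ => h1 m), (ih j).1 (by omega), hD0, add_zero]
      · intro h
        rw [hrS]
        have hk : k < l + 1 := by omega
        have hsum : (∑ m, r k m * A m j) = 1 := by
          rw [Finset.sum_eq_single (⟨k, hk⟩ : Fin (l + 1))]
          · rw [(ih ⟨k, hk⟩).2 rfl,
              hupper ⟨k, hk⟩ j (by simp only [Fin.val_mk]; omega),
              if_pos (by simp only [Fin.val_mk]; omega), one_mul]
          · intro m _ hm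
            have hmk : (m : ℕ) ≠ k := fun hh => hm (Fin.ext (by simpa using hh))
            rcases lt_or_ge k (m : ℕ) with h2 | h2
            · rw [(ih m).1 h2, zero_mul]
            · rw [hupper m j (by omega), if_neg (by omega), mul_zero]
          · intro hmem
            exact absurd (Finset.mem_univ _) hmem
        rw [hsum, (ih j).1 (by omega), hD0, add_zero]
  -- the gauge matrix
  set B : Matrix (Fin (l + 1)) (Fin (l + 1)) F :=
    Matrix.of (fun i j => r (i : ℕ) j) with hBdef
  have hBapp : ∀ i j : Fin (l + 1), B i j = r (i : ℕ) j := fun _ _ => rfl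
  have hBlow : B.BlockTriangular OrderDual.toDual := by
    intro i j hij
    exact (key (i : ℕ) j).1 (by exact_mod_cast hij)
  have hdiag : ∀ i : Fin (l + 1), B i i = 1 := fun i => (key (i : ℕ) i).2 rfl
  have hdet : B.det = 1 := by
    rw [Matrix.det_of_lowerTriangular B hBlow]
    simp [hdiag]
  have hBunit : IsUnit B.det := hdet ▸ isUnit_one
  have hInvertible : Invertible B := B.invertibleOfIsUnitDet hBunit
  have hInvLow : B⁻¹.BlockTriangular OrderDual.toDual :=
    Matrix.blockTriangular_inv_of_blockTriangular hBlow
  have hBB : B * B⁻¹ = 1 := Matrix.mul_nonsing_inv B hBunit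
  have hB'B : B⁻¹ * B = 1 := Matrix.nonsing_inv_mul B hBunit
  -- the fundamental row relation
  have hrow : ∀ i j : Fin (l + 1), (B * A + matD D B) i j = r ((i : ℕ) + 1) j := by
    intro i j
    rw [hrS]
    simp only [Matrix.add_apply, Matrix.mul_apply, matD, Matrix.of_apply, hBapp]
  set C : Matrix (Fin (l + 1)) (Fin (l + 1)) F := (B * A + matD D B) * B⁻¹ with hCdef
  have hCsplit : B * A * B⁻¹ + matD D B * B⁻¹ = C := (add_mul _ _ _).symm
  -- rows of C below the last one
  have hCi : ∀ i j : Fin (l + 1), (i : ℕ) < l →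
      C i j = if (i : ℕ) + 1 = (j : ℕ) then 1 else 0 := by
    intro i j hi
    have hi1 : (i : ℕ) + 1 < l + 1 := by omega
    have h1 : C i j = ∑ k, B ⟨(i : ℕ) + 1, hi1⟩ k * B⁻¹ k j := by
      rw [hCdef, Matrix.mul_apply]
      refine Finset.sum_congr rfl fun k _ => ?_
      rw [hrow i k, hBapp]
    rw [h1, ← Matrix.mul_apply, hBB, Matrix.one_apply]
    by_cases h : (i : ℕ) + 1 = (j : ℕ)
    · rw [if_pos h, if_pos (Fin.ext (by simpa using h))]
    · rw [if_neg h, if_neg (fun hh => h (by simpa using congrArg Fin.val hh))]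
  -- trace computation
  have htrC : Matrix.trace C = 0 := by
    have h1 : Matrix.trace (B * A * B⁻¹) = 0 := by
      rw [Matrix.trace_mul_comm, ← Matrix.mul_assoc, hB'B, Matrix.one_mul, htrace]
    have h2 : Matrix.trace (matD D B * B⁻¹) = 0 := by
      rw [Matrix.trace]
      apply Finset.sum_eq_zero
      intro i _
      rw [Matrix.diag_apply, Matrix.mul_apply]
      apply Finset.sum_eq_zero
      intro k _
      rcases lt_or_ge (k : ℕ) (i : ℕ) with h | h
      · rw [hInvLow (show OrderDual.toDual i < OrderDual.toDual k from by exact_mod_cast h),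
          mul_zero]
      · have hz : matD D B i k = 0 := by
          show D (B i k) = 0
          rcases lt_or_eq_of_le h with h' | h'
          · rw [hBapp, (key (i : ℕ) k).1 h', hD0]
          · rw [hBapp, (key (i : ℕ) k).2 h'.symm, hD1]
        rw [hz, zero_mul]
    rw [hCdef, add_mul, Matrix.trace_add, h1, h2, add_zero]
  -- the last diagonal entry of C vanishes
  have hCll : C (Fin.last l) (Fin.last l) = 0 := by
    have h1 : Matrix.trace C = C (Fin.last l) (Fin.last l) := by
      rw [Matrix.trace]
      rw [Finset.sum_eq_single (Fin.last l)]
      · rfl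
      · intro i _ hi
        have hil : (i : ℕ) < l := by
          have := i.isLt
          have : (i : ℕ) ≠ l := fun hh => hi (Fin.ext (by simpa using hh))
          omega
        rw [Matrix.diag_apply, hCi i i hil, if_neg (by omega)]
      · intro hmem
        exact absurd (Finset.mem_univ _) hmem
    rw [← h1, htrC]
  refine ⟨B, hBunit, fun j => C (Fin.last l) ⟨(j : ℕ), by omega⟩, ?_⟩
  rw [hCsplit]
  ext i j
  rw [compMat0, Matrix.of_apply]
  rcases lt_or_eq_of_le (Nat.lt_succ_iff.mp i.isLt) with hi | hi
  · -- i < l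
    rw [hCi i j hi]
    by_cases h : (i : ℕ) + 1 = (j : ℕ)
    · rw [if_pos h, if_pos h]
    · rw [if_neg h, if_neg h, dif_neg (fun hh => by omega)]
  · -- i = last
    have hil : i = Fin.last l := Fin.ext (by simpa using hi)
    subst hil
    rcases lt_or_eq_of_le (Nat.lt_succ_iff.mp j.isLt) with hj | hj
    · -- j < l
      rw [if_neg (by simp; omega), dif_pos ⟨by simp, by simpa using hj⟩]
    · -- j = last
      have hjl : j = Fin.last l := Fin.ext (by simpa using hj)
      subst hjl
      rw [hCll, if_neg (by simp), dif_neg (by simp)]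
end
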